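/- In the real quaternions ℍ, let φ = (1 + √5)/2 be the golden ratio, ζ = (φ + φ⁻¹·i + j)/2, and let 𝒪_𝔦 = ℤ[φ]·1 + ℤ[φ]·i + ℤ[φ]·ζ + ℤ[φ]·(iζ) (the binary icosahedral order). Then Hur(ℤ[φ]) ⊆ 𝒪_𝔦: every quaternion whose coordinates are all in ℤ[φ] or all in ℤ[φ] + 1/2 lies in 𝒪_𝔦 (indeed j = 2ζ − φ − φ⁻¹·i, k = 2iζ + φ⁻¹ − φ·i, and (1+i+j+k)/2 = (1−φ)·i + ζ + iζ), and the containment is strict since ζ ∉ Hur(ℤ[φ]). -/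

import Mathlib

open Quaternion

/-- The golden ratio `φ = (1+√5)/2`. -/
noncomputable def φgold : ℝ := (1 + Real.sqrt 5) / 2

/-- Membership in `ℤ[φ] ⊆ ℝ`. -/
def InZphi (x : ℝ) : Prop :=
  ∃ a b : ℤ, x = a + b * φgold

/-- `Hur(ℤ[φ])`: real quaternions whose four coordinates are all in `ℤ[φ]` or
all in `ℤ[φ] + 1/2`. -/
def IsHurPhi (q : ℍ) : Prop :=
  (InZphi q.re ∧ InZphi q.imI ∧ InZphi q.imJ ∧ InZphi q.imK) ∨
  (InZphi (q.re - 1/2) ∧ InZphi (q.imI - 1/2) ∧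
    InZphi (q.imJ - 1/2) ∧ InZphi (q.imK - 1/2))

/-- The quaternion `i`. -/
def qi : ℍ := ⟨0, 1, 0, 0⟩

/-- The quaternion `j`. -/
def qj : ℍ := ⟨0, 0, 1, 0⟩

/-- `ζ = (φ + φ⁻¹ i + j)/2`. -/
noncomputable def ζq : ℍ := ((φgold : ℍ) + ((φgold⁻¹ : ℝ) : ℍ) * qi + qj) / (2 : ℍ)

/-- Membership in the binary icosahedral order
`𝒪_𝔦 = ℤ[φ]·1 + ℤ[φ]·i + ℤ[φ]·ζ + ℤ[φ]·(iζ)`. -/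
noncomputable def InOrdI (q : ℍ) : Prop :=
  ∃ a b c d : ℝ, InZphi a ∧ InZphi b ∧ InZphi c ∧ InZphi d ∧
    q = (a : ℍ) * 1 + (b : ℍ) * qi + (c : ℍ) * ζq + (d : ℍ) * (qi * ζq)

/- ### Auxiliary lemmas -/

lemma sqrt5_sq : Real.sqrt 5 ^ 2 = 5 := Real.sq_sqrt (by norm_num)

lemma phi_sq : φgold ^ 2 = φgold + 1 := by
  have h := sqrt5_sq
  rw [φgold]; nlinarith

lemma phi_pos : 0 < φgold := by
  have := Real.sqrt_nonneg 5
  rw [φgold]; linarith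

lemma phi_inv : φgold⁻¹ = φgold - 1 := by
  have h : φgold * (φgold - 1) = 1 := by nlinarith [phi_sq]
  exact inv_eq_of_mul_eq_one_right h

lemma inZphi_zero : InZphi 0 := ⟨0, 0, by push_cast; ring⟩
lemma inZphi_one : InZphi 1 := ⟨1, 0, by push_cast; ring⟩
lemma inZphi_two : InZphi 2 := ⟨2, 0, by push_cast; ring⟩
lemma inZphi_phi : InZphi φgold := ⟨0, 1, by push_cast; ring⟩
lemma inZphi_phi_inv : InZphi φgold⁻¹ := ⟨-1, 1, by rw [phi_inv]; push_cast; ring⟩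

lemma InZphi.add {x y : ℝ} (hx : InZphi x) (hy : InZphi y) : InZphi (x + y) := by
  obtain ⟨a, b, rfl⟩ := hx; obtain ⟨c, d, rfl⟩ := hy
  exact ⟨a + c, b + d, by push_cast; ring⟩

lemma InZphi.neg {x : ℝ} (hx : InZphi x) : InZphi (-x) := by
  obtain ⟨a, b, rfl⟩ := hx
  exact ⟨-a, -b, by push_cast; ring⟩

lemma InZphi.sub {x y : ℝ} (hx : InZphi x) (hy : InZphi y) : InZphi (x - y) := by
  simpa [sub_eq_add_neg] using hx.add hy.neg

lemma InZphi.mul {x y : ℝ} (hx : InZphi x) (hy : InZphi y) : InZphi (x * y) := by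
  obtain ⟨a, b, rfl⟩ := hx; obtain ⟨c, d, rfl⟩ := hy
  refine ⟨a * c + b * d, a * d + b * c + b * d, ?_⟩
  push_cast
  linear_combination ((b : ℝ) * d) * phi_sq

@[simp] lemma qi_re : qi.re = 0 := rfl
@[simp] lemma qi_imI : qi.imI = 1 := rfl
@[simp] lemma qi_imJ : qi.imJ = 0 := rfl
@[simp] lemma qi_imK : qi.imK = 0 := rfl
@[simp] lemma qj_re : qj.re = 0 := rfl
@[simp] lemma qj_imI : qj.imI = 0 := rfl
@[simp] lemma qj_imJ : qj.imJ = 1 := rfl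
@[simp] lemma qj_imK : qj.imK = 0 := rfl

lemma zeta_eq : ζq = (⟨φgold/2, φgold⁻¹/2, 1/2, 0⟩ : ℍ) := by
  have h2 : (2:ℍ)⁻¹ = (((2:ℝ)⁻¹ : ℝ):ℍ) := by
    have : (2:ℍ) = ((2:ℝ):ℍ) := by norm_cast
    rw [this, ← Quaternion.coe_inv]
  rw [ζq, div_eq_mul_inv, h2]
  ext <;> simp [-Quaternion.coe_inv] <;> ring

lemma zeta_comps : ζq.re = φgold/2 ∧ ζq.imI = φgold⁻¹/2 ∧ ζq.imJ = 1/2 ∧ ζq.imK = 0 := by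
  rw [zeta_eq]; exact ⟨rfl, rfl, rfl, rfl⟩

lemma izeta_eq : qi * ζq = (⟨-(φgold⁻¹/2), φgold/2, 0, 1/2⟩ : ℍ) := by
  ext <;> simp [zeta_comps]

lemma izeta_comps : (qi * ζq).re = -(φgold⁻¹/2) ∧ (qi * ζq).imI = φgold/2 ∧
    (qi * ζq).imJ = 0 ∧ (qi * ζq).imK = 1/2 := by
  rw [izeta_eq]; exact ⟨rfl, rfl, rfl, rfl⟩

lemma comb_eq (A B C D : ℝ) :
    (A : ℍ) * 1 + (B : ℍ) * qi + (C : ℍ) * ζq + (D : ℍ) * (qi * ζq)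
      = (⟨A + C*(φgold/2) - D*(φgold⁻¹/2),
          B + C*(φgold⁻¹/2) + D*(φgold/2), C/2, D/2⟩ : ℍ) := by
  ext <;> simp [zeta_comps, izeta_comps, -Quaternion.re_mul, -Quaternion.imI_mul, -Quaternion.imJ_mul, -Quaternion.imK_mul, Quaternion.coe_mul_eq_smul] <;> ring

lemma repr_eq (q : ℍ) :
    q = ((q.re - q.imJ * φgold + q.imK * φgold⁻¹ : ℝ) : ℍ) * 1
      + ((q.imI - q.imJ * φgold⁻¹ - q.imK * φgold : ℝ) : ℍ) * qi
      + ((2 * q.imJ : ℝ) : ℍ) * ζq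
      + ((2 * q.imK : ℝ) : ℍ) * (qi * ζq) := by
  rw [comb_eq]; ext <;> simp <;> ring

lemma sqrt5_not_ratio (m n : ℤ) (hn : n ≠ 0) (h : (n : ℝ) * Real.sqrt 5 = m) :
    False := by
  have h5 : Irrational (Real.sqrt 5) := by
    simpa using (Nat.Prime.irrational_sqrt (by norm_num : Nat.Prime 5))
  have hn' : (n : ℝ) ≠ 0 := Int.cast_ne_zero.mpr hn
  refine h5 ⟨(m : ℚ) / (n : ℚ), ?_⟩
  push_cast
  field_simp
  linarith [h]

/-- `Hur(ℤ[φ])` is strictly contained in the binary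
icosahedral order `𝒪_𝔦`: every Hurwitz quaternion over `ℤ[φ]` lies in `𝒪_𝔦`,
while `ζ = (φ + φ⁻¹ i + j)/2 ∈ 𝒪_𝔦` is not a Hurwitz quaternion. -/
theorem hurwitz_ssubset_binary_icosahedral_order :
    (∀ q : ℍ, IsHurPhi q → InOrdI q) ∧ InOrdI ζq ∧ ¬ IsHurPhi ζq := by
  refine ⟨?_, ?_, ?_⟩
  · rintro q (⟨ha, hb, hc, hd⟩ | ⟨ha, hb, hc, hd⟩)
    · refine ⟨_, _, _, _, ?_, ?_, ?_, ?_, repr_eq q⟩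
      · exact (ha.sub (hc.mul inZphi_phi)).add (hd.mul inZphi_phi_inv)
      · exact (hb.sub (hc.mul inZphi_phi_inv)).sub (hd.mul inZphi_phi)
      · exact inZphi_two.mul hc
      · exact inZphi_two.mul hd
    · refine ⟨_, _, _, _, ?_, ?_, ?_, ?_, repr_eq q⟩
      · have hA : q.re - q.imJ * φgold + q.imK * φgold⁻¹
            = (q.re - 1/2) - (q.imJ - 1/2) * φgold + (q.imK - 1/2) * φgold⁻¹ := by
          rw [phi_inv]; ring
        rw [hA]
        exact (ha.sub (hc.mul inZphi_phi)).add (hd.mul inZphi_phi_inv)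
      · have hB : q.imI - q.imJ * φgold⁻¹ - q.imK * φgold
            = ((q.imI - 1/2) - (q.imJ - 1/2) * φgold⁻¹ - (q.imK - 1/2) * φgold)
              + (1 - φgold) := by
          rw [phi_inv]; ring
        rw [hB]
        exact ((hb.sub (hc.mul inZphi_phi_inv)).sub (hd.mul inZphi_phi)).add
          (inZphi_one.sub inZphi_phi)
      · have hC : 2 * q.imJ = 2 * (q.imJ - 1/2) + 1 := by ring
        rw [hC]
        exact (inZphi_two.mul hc).add inZphi_one
      · have hD : 2 * q.imK = 2 * (q.imK - 1/2) + 1 := by ring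
        rw [hD]
        exact (inZphi_two.mul hd).add inZphi_one
  · refine ⟨0, 0, 1, 0, inZphi_zero, inZphi_zero, inZphi_one, inZphi_zero, ?_⟩
    push_cast
    simp
  · rintro (⟨-, -, h, -⟩ | ⟨h, -, -, -⟩)
    · rw [zeta_eq] at h
      obtain ⟨a, b, hab⟩ := h
      simp only [φgold] at hab
      rcases eq_or_ne b 0 with rfl | hb
      · have h1 : ((2 * a : ℤ) : ℝ) = 1 := by push_cast at hab ⊢; linarith
        have : (2 * a : ℤ) = 1 := by exact_mod_cast h1
        omega
      · refine sqrt5_not_ratio (1 - 2*a - b) b hb ?_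
        push_cast
        linear_combination (-2) * hab
    · rw [zeta_eq] at h
      obtain ⟨a, b, hab⟩ := h
      simp only [φgold] at hab
      refine sqrt5_not_ratio (-1 - 4*a - 2*b) (2*b - 1) (by omega) ?_
      push_cast
      linear_combination (-4) * hab
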